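/- Variance and standard-deviation bound for the approximate pathwise dual: With η* the optimal martingale functions and η̃ any approximations, the pathwise dual objective Z̃ := sup_{a∈A^H} ( Σ_{t=0}^{H−1} ( R_t(S_t(a_{<t}),a_t) − η̃_{t+1}(S_t(a_{<t}),a_t) ) + F(S_H(a_{<H})) ) satisfies Var[Z̃] ≤ E[ ( Σ_{t=0}^{H−1} sup_{(x',a')∈S×A} |η_{t+1}^*(x',a') − η̃_{t+1}(x',a')| )² ] and hence Dev[Z̃] ≤ Σ_{t=0}^{H−1} E[ sup_{(x',a')∈S×A} |η_{t+1}^*(x',a') − η̃_{t+1}(x',a')|² ]^{1/2}, where Dev denotes the standard deviation. -/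

import Mathlib

open MeasureTheory ProbabilityTheory

section Aux

lemma integrable_of_bound {α : Type*} [MeasurableSpace α] {μ : Measure α} [IsFiniteMeasure μ]
    {f : α → ℝ} (C : ℝ) (hm : AEStronglyMeasurable f μ) (hb : ∀ x, |f x| ≤ C) :
    Integrable f μ :=
  (MemLp.of_bound hm C (Filter.Eventually.of_forall fun x => by
    simpa [Real.norm_eq_abs] using hb x)).integrable le_rfl

lemma memLp2_of_bound {α : Type*} [MeasurableSpace α] {μ : Measure α} [IsFiniteMeasure μ]
    {f : α → ℝ} (C : ℝ) (hm : AEStronglyMeasurable f μ) (hb : ∀ x, |f x| ≤ C) :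
    MemLp f 2 μ :=
  MemLp.of_bound hm C (Filter.Eventually.of_forall fun x => by
    simpa [Real.norm_eq_abs] using hb x)

lemma minkowski_aux {α : Type*} [MeasurableSpace α] (μ : Measure α) [IsProbabilityMeasure μ]
    {f g : α → ℝ} {Cf Cg : ℝ}
    (hfm : AEStronglyMeasurable f μ) (hgm : AEStronglyMeasurable g μ)
    (hf0 : ∀ x, 0 ≤ f x) (hg0 : ∀ x, 0 ≤ g x)
    (hfb : ∀ x, f x ≤ Cf) (hgb : ∀ x, g x ≤ Cg) :
    Real.sqrt (∫ x, (f x + g x) ^ 2 ∂μ) ≤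
      Real.sqrt (∫ x, f x ^ 2 ∂μ) + Real.sqrt (∫ x, g x ^ 2 ∂μ) := by
  have habsf : ∀ x, |f x| ≤ Cf := fun x => by rw [abs_of_nonneg (hf0 x)]; exact hfb x
  have habsg : ∀ x, |g x| ≤ Cg := fun x => by rw [abs_of_nonneg (hg0 x)]; exact hgb x
  have hf2 : Integrable (fun x => f x ^ 2) μ :=
    integrable_of_bound (Cf ^ 2) (hfm.pow 2) (fun x => by
      rw [abs_pow]; exact pow_le_pow_left₀ (abs_nonneg _) (habsf x) 2)
  have hg2 : Integrable (fun x => g x ^ 2) μ :=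
    integrable_of_bound (Cg ^ 2) (hgm.pow 2) (fun x => by
      rw [abs_pow]; exact pow_le_pow_left₀ (abs_nonneg _) (habsg x) 2)
  have hfg : Integrable (fun x => f x * g x) μ :=
    integrable_of_bound (Cf * Cg) (hfm.mul hgm) (fun x => by
      rw [abs_mul]
      exact mul_le_mul (habsf x) (habsg x) (abs_nonneg _) ((abs_nonneg _).trans (habsf x)))
  have hIf : 0 ≤ ∫ x, f x ^ 2 ∂μ := integral_nonneg fun x => sq_nonneg _
  have hIg : 0 ≤ ∫ x, g x ^ 2 ∂μ := integral_nonneg fun x => sq_nonneg _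
  have hCS : ∫ x, f x * g x ∂μ ≤
      Real.sqrt (∫ x, f x ^ 2 ∂μ) * Real.sqrt (∫ x, g x ^ 2 ∂μ) := by
    have hpq : (2 : ℝ).HolderConjugate 2 := Real.HolderConjugate.two_two
    have h2 : ENNReal.ofReal (2 : ℝ) = 2 := by
      rw [ENNReal.ofReal_ofNat]
    have hfLp : MemLp f (ENNReal.ofReal (2:ℝ)) μ := h2 ▸ memLp2_of_bound Cf hfm habsf
    have hgLp : MemLp g (ENNReal.ofReal (2:ℝ)) μ := h2 ▸ memLp2_of_bound Cg hgm habsg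
    have := integral_mul_le_Lp_mul_Lq_of_nonneg hpq
      (Filter.Eventually.of_forall hf0) (Filter.Eventually.of_forall hg0) hfLp hgLp
    have hr : ∀ x : ℝ, x ^ (2:ℝ) = x ^ (2:ℕ) := fun x => by
      rw [← Real.rpow_natCast x 2]; norm_num
    simp_rw [hr] at this
    rw [Real.sqrt_eq_rpow, Real.sqrt_eq_rpow]
    exact this
  have hexp : ∫ x, (f x + g x) ^ 2 ∂μ
      = ∫ x, f x ^ 2 ∂μ + 2 * ∫ x, f x * g x ∂μ + ∫ x, g x ^ 2 ∂μ := by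
    have h1 : (fun x => (f x + g x) ^ 2)
        = fun x => f x ^ 2 + 2 * (f x * g x) + g x ^ 2 := by
      funext x; ring
    have hc2 : Integrable (fun x => 2 * (f x * g x)) μ := hfg.const_mul 2
    have hadd : Integrable (fun x => f x ^ 2 + 2 * (f x * g x)) μ := hf2.add hc2
    rw [h1, integral_add hadd hg2, integral_add hf2 hc2, MeasureTheory.integral_const_mul]
  calc Real.sqrt (∫ x, (f x + g x) ^ 2 ∂μ)
      ≤ Real.sqrt ((Real.sqrt (∫ x, f x ^ 2 ∂μ) + Real.sqrt (∫ x, g x ^ 2 ∂μ)) ^ 2) := by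
        apply Real.sqrt_le_sqrt
        rw [hexp, add_sq, Real.sq_sqrt hIf, Real.sq_sqrt hIg]
        nlinarith [hCS]
    _ = _ := Real.sqrt_sq (by positivity)

end Aux

/-- The controlled trajectory in the iterative-function representation:
`S_0 = x`, `S_{t+1}(a_{<t+1}) = 𝒦_{t+1}(S_t(a_{<t}), a_t, ε_{t+1})`. -/
def traj {𝒮 𝒜 E : Type*} (𝒦 : ℕ → 𝒮 → 𝒜 → E → 𝒮) (x : 𝒮)
    (a : ℕ → 𝒜) (es : ℕ → E) : ℕ → 𝒮
  | 0 => x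
  | t + 1 => 𝒦 (t + 1) (traj 𝒦 x a es t) (a t) (es (t + 1))

/-- **Variance and standard-deviation bound for the approximate pathwise
dual.**  With `η⋆` the optimal martingale functions (for which the pathwise
dual objective is a.s. constant equal to `V₀⋆(x)`) and `η̃` any approximations,
the pathwise dual objective `Z̃` built from `η̃` satisfies
`Var[Z̃] ≤ E[(Σ_t sup_{(x',a')} |η⋆_{t+1} − η̃_{t+1}|)²]` and
`Dev[Z̃] ≤ Σ_t E[sup_{(x',a')} |η⋆_{t+1} − η̃_{t+1}|²]^{1/2}`. -/
theorem variance_bound_approximate_pathwise_dual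
    {𝒮 𝒜 : Type*} [Nonempty 𝒜]
    {E : Type*} [mE : MeasurableSpace E]
    {Ω₀ : Type*} [MeasurableSpace Ω₀]
    (P₀ : Measure Ω₀) [IsProbabilityMeasure P₀]
    (ν : Measure E) [IsProbabilityMeasure ν]
    (μE : Measure (ℕ → E)) [IsProbabilityMeasure μE]
    (hcoord : ∀ n, Measure.map (fun es : ℕ → E => es n) μE = ν)
    (hindep : iIndepFun (m := fun _ : ℕ => mE) (fun n (es : ℕ → E) => es n) μE)
    (H : ℕ) (x : 𝒮)
    (𝒦 : ℕ → 𝒮 → 𝒜 → E → 𝒮)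
    (R : ℕ → 𝒮 → 𝒜 → ℝ) (F : 𝒮 → ℝ) (Rmax : ℝ) (hRmax : 0 ≤ Rmax)
    (hRb : ∀ t y a, |R t y a| ≤ Rmax) (hFb : ∀ y, |F y| ≤ Rmax)
    -- the optimal value functions (Bellman recursion), bounded
    (Vstar : ℕ → 𝒮 → ℝ)
    (hVstarH : ∀ y, Vstar H y = F y)
    (hBell : ∀ t, t < H → ∀ y,
      Vstar t y = ⨆ a : 𝒜, (R t y a + ∫ e, Vstar (t + 1) (𝒦 (t + 1) y a e) ∂ν))
    (hVb : ∀ t y, |Vstar t y| ≤ ((H : ℝ) + 1) * Rmax)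
    -- the approximate martingale functions `η̃`, bounded
    (ηtil : ℕ → Ω₀ → 𝒮 → 𝒜 → E → ℝ) (Bη : ℝ)
    (hηb : ∀ t ω₀ y a e, |ηtil t ω₀ y a e| ≤ Bη)
    -- the pathwise dual objective `Z̃` built from `η̃`
    (Z : Ω₀ × (ℕ → E) → ℝ)
    (hZ : ∀ w, Z w = ⨆ a : ℕ → 𝒜,
      (∑ t ∈ Finset.range H,
          (R t (traj 𝒦 x a w.2 t) (a t)
            - ηtil (t + 1) w.1 (traj 𝒦 x a w.2 t) (a t) (w.2 (t + 1)))
        + F (traj 𝒦 x a w.2 H)))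
    -- the uniform approximation errors `sup_{(x',a')} |η⋆_{t+1} − η̃_{t+1}|`
    (err : ℕ → Ω₀ × (ℕ → E) → ℝ)
    (herr : ∀ t w, err t w = ⨆ p : 𝒮 × 𝒜,
      |(Vstar (t + 1) (𝒦 (t + 1) p.1 p.2 (w.2 (t + 1)))
          - ∫ e, Vstar (t + 1) (𝒦 (t + 1) p.1 p.2 e) ∂ν)
        - ηtil (t + 1) w.1 p.1 p.2 (w.2 (t + 1))|)
    -- measurability of the pathwise suprema
    (hZm : AEStronglyMeasurable Z (P₀.prod μE))
    (herrm : ∀ t, AEStronglyMeasurable (err t) (P₀.prod μE)) :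
    variance Z (P₀.prod μE)
      ≤ (∫ w, (∑ t ∈ Finset.range H, err t w) ^ 2 ∂(P₀.prod μE)) ∧
    Real.sqrt (variance Z (P₀.prod μE))
      ≤ ∑ t ∈ Finset.range H,
          Real.sqrt (∫ w, (err t w) ^ 2 ∂(P₀.prod μE)) := by
  classical
  have hS : Nonempty 𝒮 := ⟨x⟩
  have hA' : Nonempty (ℕ → 𝒜) := inferInstance
  set μ : Measure (Ω₀ × (ℕ → E)) := P₀.prod μE with hμdef
  set C : ℝ := ((H : ℝ) + 1) * Rmax with hCdef
  have hC0 : 0 ≤ C := by positivity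
  have hBη0 : 0 ≤ Bη := le_trans (abs_nonneg _) (hηb 0 (Classical.choice (by
    by_contra h
    rw [not_nonempty_iff] at h
    have h1 : P₀ Set.univ = 1 := measure_univ
    rw [Set.univ_eq_empty_iff.2 h] at h1
    simp at h1)) x (Classical.arbitrary 𝒜) (Classical.choice (by
    by_contra h
    rw [not_nonempty_iff] at h
    have h1 : ν Set.univ = 1 := measure_univ
    rw [Set.univ_eq_empty_iff.2 h] at h1
    simp at h1)))
  -- the conditional expectation of the value function
  set I : ℕ → 𝒮 → 𝒜 → ℝ := fun t y a => ∫ e, Vstar (t + 1) (𝒦 (t + 1) y a e) ∂ν with hIdef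
  have hIb : ∀ t y a, |I t y a| ≤ C := by
    intro t y a
    have := norm_integral_le_of_norm_le_const (μ := ν)
      (f := fun e => Vstar (t + 1) (𝒦 (t + 1) y a e)) (C := C)
      (Filter.Eventually.of_forall fun e => by simpa [Real.norm_eq_abs] using hVb (t+1) _)
    simpa [Real.norm_eq_abs] using this
  -- objective functions
  set O : (Ω₀ × (ℕ → E)) → (ℕ → 𝒜) → ℝ := fun w a =>
    ∑ t ∈ Finset.range H,
        (R t (traj 𝒦 x a w.2 t) (a t)
          - ηtil (t + 1) w.1 (traj 𝒦 x a w.2 t) (a t) (w.2 (t + 1)))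
      + F (traj 𝒦 x a w.2 H) with hOdef
  set Ostar : (ℕ → E) → (ℕ → 𝒜) → ℝ := fun es a =>
    ∑ t ∈ Finset.range H,
        (R t (traj 𝒦 x a es t) (a t)
          - (Vstar (t + 1) (traj 𝒦 x a es (t + 1)) - I t (traj 𝒦 x a es t) (a t)))
      + F (traj 𝒦 x a es H) with hOstardef
  -- rewriting of Ostar via telescoping
  have hOstar_eq : ∀ es a, Ostar es a = Vstar 0 x
      + ∑ t ∈ Finset.range H,
          (R t (traj 𝒦 x a es t) (a t) + I t (traj 𝒦 x a es t) (a t)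
            - Vstar t (traj 𝒦 x a es t)) := by
    intro es a
    set g : ℕ → ℝ := fun t => Vstar t (traj 𝒦 x a es t) with hgdef
    set q : ℕ → ℝ := fun t =>
      R t (traj 𝒦 x a es t) (a t) + I t (traj 𝒦 x a es t) (a t) with hqdef
    have htel : ∑ t ∈ Finset.range H, g (t + 1) + g 0
        = ∑ t ∈ Finset.range H, g t + g H :=
      (Finset.sum_range_succ' g H).symm.trans (Finset.sum_range_succ g H)
    have hg0 : g 0 = Vstar 0 x := rfl
    have hstep : Ostar es a
        = ∑ t ∈ Finset.range H, (q t - g (t + 1)) + g H := by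
      simp only [hOstardef]
      rw [← hVstarH]
      congr 1
      refine Finset.sum_congr rfl fun t _ => ?_
      simp only [hqdef, hgdef]
      ring
    have hgoal : Vstar 0 x + ∑ t ∈ Finset.range H,
          (R t (traj 𝒦 x a es t) (a t) + I t (traj 𝒦 x a es t) (a t)
            - Vstar t (traj 𝒦 x a es t))
        = Vstar 0 x + ∑ t ∈ Finset.range H, (q t - g t) := rfl
    rw [hstep, hgoal, Finset.sum_sub_distrib, Finset.sum_sub_distrib]
    linarith [htel]
  have hBddQ : ∀ t y, BddAbove (Set.range fun a : 𝒜 => R t y a + I t y a) := by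
    intro t y
    refine ⟨Rmax + C, ?_⟩
    rintro _ ⟨a, rfl⟩
    have h1 := abs_le.1 (hRb t y a)
    have h2 := abs_le.1 (hIb t y a)
    exact add_le_add h1.2 h2.2
  have hQle : ∀ t, t < H → ∀ y a, R t y a + I t y a ≤ Vstar t y := by
    intro t ht y a
    rw [hBell t ht y]
    exact le_ciSup (hBddQ t y) a
  -- strong duality: pathwise dual with the optimal martingale is constant
  have hup : ∀ es a, Ostar es a ≤ Vstar 0 x := by
    intro es a
    rw [hOstar_eq]
    have hsum : ∑ t ∈ Finset.range H,
        (R t (traj 𝒦 x a es t) (a t) + I t (traj 𝒦 x a es t) (a t)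
          - Vstar t (traj 𝒦 x a es t)) ≤ 0 := by
      refine Finset.sum_nonpos fun t ht => ?_
      have := hQle t (Finset.mem_range.1 ht) (traj 𝒦 x a es t) (a t)
      linarith
    linarith
  have hOstarBdd : ∀ es, BddAbove (Set.range (Ostar es)) := fun es =>
    ⟨Vstar 0 x, by rintro _ ⟨a, rfl⟩; exact hup es a⟩
  have hdual : ∀ es : ℕ → E, (⨆ a : ℕ → 𝒜, Ostar es a) = Vstar 0 x := by
    intro es
    refine le_antisymm (ciSup_le (hup es)) (le_of_forall_sub_le ?_)
    intro ε hε
    set δ : ℝ := ε / ((H : ℝ) + 1) with hδdef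
    have hδ : 0 < δ := by positivity
    have hpickex : ∀ t y, ∃ b : 𝒜, t < H → Vstar t y - δ < R t y b + I t y b := by
      intro t y
      by_cases h : t < H
      · have hlt : Vstar t y - δ < ⨆ b : 𝒜, (R t y b + I t y b) := by
          have h2 : (⨆ b : 𝒜, (R t y b + I t y b)) = Vstar t y := by
            simp only [hIdef]
            exact (hBell t h y).symm
          rw [h2]; linarith
        obtain ⟨b, hb⟩ := exists_lt_of_lt_ciSup hlt
        exact ⟨b, fun _ => hb⟩
      · exact ⟨Classical.arbitrary 𝒜, fun ht => absurd ht h⟩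
    choose pick hpick using hpickex
    set f : ℕ → 𝒮 × 𝒜 := fun n => Nat.rec (motive := fun _ => 𝒮 × 𝒜)
      (x, pick 0 x)
      (fun t p => (𝒦 (t + 1) p.1 p.2 (es (t + 1)),
        pick (t + 1) (𝒦 (t + 1) p.1 p.2 (es (t + 1))))) n with hfdef
    set pol : ℕ → 𝒜 := fun t => (f t).2 with hpoldef
    have htraj : ∀ t, traj 𝒦 x pol es t = (f t).1 := by
      intro t
      induction t with
      | zero => rfl
      | succ t ih =>
        show 𝒦 (t + 1) (traj 𝒦 x pol es t) (pol t) (es (t + 1)) = (f (t + 1)).1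
        rw [ih]
    have hpol : ∀ t, pol t = pick t ((f t).1) := by
      intro t
      cases t with
      | zero => rfl
      | succ t => rfl
    have hlow : Vstar 0 x - ε ≤ Ostar es pol := by
      rw [hOstar_eq]
      have hterm : ∀ t ∈ Finset.range H,
          -δ ≤ R t (traj 𝒦 x pol es t) (pol t) + I t (traj 𝒦 x pol es t) (pol t)
            - Vstar t (traj 𝒦 x pol es t) := by
        intro t ht
        have h := hpick t ((f t).1) (Finset.mem_range.1 ht)
        rw [htraj t, hpol t]
        linarith
      have hsum := Finset.sum_le_sum hterm
      have hcard : ∑ _t ∈ Finset.range H, (-δ) = -((H : ℝ) * δ) := by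
        rw [Finset.sum_const, Finset.card_range, nsmul_eq_mul]
        ring
      have hHδ : (H : ℝ) * δ ≤ ε := by
        have h1 : (H : ℝ) / ((H : ℝ) + 1) ≤ 1 := by
          rw [div_le_one (by positivity)]
          linarith
        calc (H : ℝ) * δ = ε * ((H : ℝ) / ((H : ℝ) + 1)) := by
              rw [hδdef]; ring
          _ ≤ ε * 1 := mul_le_mul_of_nonneg_left h1 hε.le
          _ = ε := mul_one ε
      rw [hcard] at hsum
      linarith
    exact hlow.trans (le_ciSup (hOstarBdd es) pol)
  -- bound on |O|
  set M : ℝ := (H : ℝ) * (Rmax + Bη) + Rmax with hMdef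
  have hOb : ∀ w a, |O w a| ≤ M := by
    intro w a
    have h1 : ∀ t ∈ Finset.range H,
        |R t (traj 𝒦 x a w.2 t) (a t)
          - ηtil (t + 1) w.1 (traj 𝒦 x a w.2 t) (a t) (w.2 (t + 1))| ≤ Rmax + Bη := by
      intro t _
      exact (abs_sub (R t (traj 𝒦 x a w.2 t) (a t)) _).trans
        (add_le_add (hRb _ _ _) (hηb _ _ _ _ _))
    calc |O w a| ≤ |∑ t ∈ Finset.range H,
          (R t (traj 𝒦 x a w.2 t) (a t)
            - ηtil (t + 1) w.1 (traj 𝒦 x a w.2 t) (a t) (w.2 (t + 1)))|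
        + |F (traj 𝒦 x a w.2 H)| := abs_add_le _ _
      _ ≤ (H : ℝ) * (Rmax + Bη) + Rmax := by
          refine add_le_add ?_ (hFb _)
          calc _ ≤ ∑ t ∈ Finset.range H, (Rmax + Bη) :=
                (Finset.abs_sum_le_sum_abs _ _).trans (Finset.sum_le_sum h1)
            _ = (H : ℝ) * (Rmax + Bη) := by
                rw [Finset.sum_const, Finset.card_range, nsmul_eq_mul]
  have hOBdd : ∀ w, BddAbove (Set.range (O w)) := by
    intro w
    exact ⟨M, by rintro _ ⟨a, rfl⟩; exact (abs_le.1 (hOb w a)).2⟩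
  have hZb : ∀ w, |Z w| ≤ M := by
    intro w
    rw [hZ w, abs_le]
    constructor
    · exact le_trans (abs_le.1 (hOb w (Classical.arbitrary _))).1 (le_ciSup (hOBdd w) _)
    · exact ciSup_le fun a => (abs_le.1 (hOb w a)).2
  -- err bounds
  have herrBdd : ∀ (t : ℕ) (w : Ω₀ × (ℕ → E)), BddAbove (Set.range fun p : 𝒮 × 𝒜 =>
      |(Vstar (t + 1) (𝒦 (t + 1) p.1 p.2 (w.2 (t + 1)))
          - ∫ e, Vstar (t + 1) (𝒦 (t + 1) p.1 p.2 e) ∂ν)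
        - ηtil (t + 1) w.1 p.1 p.2 (w.2 (t + 1))|) := by
    intro t w
    refine ⟨C + C + Bη, ?_⟩
    rintro _ ⟨p, rfl⟩
    calc _ ≤ |Vstar (t + 1) (𝒦 (t + 1) p.1 p.2 (w.2 (t + 1)))
          - ∫ e, Vstar (t + 1) (𝒦 (t + 1) p.1 p.2 e) ∂ν|
        + |ηtil (t + 1) w.1 p.1 p.2 (w.2 (t + 1))| := abs_sub _ _
      _ ≤ C + C + Bη := by
          refine add_le_add (le_trans (abs_sub _ _) (add_le_add (hVb _ _) ?_)) (hηb _ _ _ _ _)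
          exact hIb t p.1 p.2
  have herr0 : ∀ t w, 0 ≤ err t w := by
    intro t w
    rw [herr t w]
    exact le_trans (abs_nonneg _) (le_ciSup (herrBdd t w) (Classical.arbitrary _))
  have herrb : ∀ t w, err t w ≤ C + C + Bη := by
    intro t w
    rw [herr t w]
    refine ciSup_le fun p => ?_
    calc _ ≤ |Vstar (t + 1) (𝒦 (t + 1) p.1 p.2 (w.2 (t + 1)))
          - ∫ e, Vstar (t + 1) (𝒦 (t + 1) p.1 p.2 e) ∂ν|
        + |ηtil (t + 1) w.1 p.1 p.2 (w.2 (t + 1))| := abs_sub _ _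
      _ ≤ C + C + Bη :=
          add_le_add (le_trans (abs_sub _ _) (add_le_add (hVb _ _) (hIb t p.1 p.2)))
            (hηb _ _ _ _ _)
  -- key deviation bound
  have hkey : ∀ w, |Z w - Vstar 0 x| ≤ ∑ t ∈ Finset.range H, err t w := by
    intro w
    have hZw : Z w = ⨆ a : ℕ → 𝒜, O w a := hZ w
    have hOOstar : ∀ a : ℕ → 𝒜,
        |O w a - Ostar w.2 a| ≤ ∑ t ∈ Finset.range H, err t w := by
      intro a
      have hdiff : O w a - Ostar w.2 a = ∑ t ∈ Finset.range H,
          ((Vstar (t + 1) (𝒦 (t + 1) (traj 𝒦 x a w.2 t) (a t) (w.2 (t + 1)))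
              - I t (traj 𝒦 x a w.2 t) (a t))
            - ηtil (t + 1) w.1 (traj 𝒦 x a w.2 t) (a t) (w.2 (t + 1))) := by
        simp only [hOdef, hOstardef]
        have h1 : ∀ t, traj 𝒦 x a w.2 (t + 1)
            = 𝒦 (t + 1) (traj 𝒦 x a w.2 t) (a t) (w.2 (t + 1)) := fun t => rfl
        have h2 : (∑ t ∈ Finset.range H,
              (R t (traj 𝒦 x a w.2 t) (a t)
                - ηtil (t + 1) w.1 (traj 𝒦 x a w.2 t) (a t) (w.2 (t + 1)))
            + F (traj 𝒦 x a w.2 H))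
            - (∑ t ∈ Finset.range H,
              (R t (traj 𝒦 x a w.2 t) (a t)
                - (Vstar (t + 1) (traj 𝒦 x a w.2 (t + 1))
                  - I t (traj 𝒦 x a w.2 t) (a t)))
            + F (traj 𝒦 x a w.2 H))
            = ∑ t ∈ Finset.range H,
              ((R t (traj 𝒦 x a w.2 t) (a t)
                - ηtil (t + 1) w.1 (traj 𝒦 x a w.2 t) (a t) (w.2 (t + 1)))
              - (R t (traj 𝒦 x a w.2 t) (a t)
                - (Vstar (t + 1) (traj 𝒦 x a w.2 (t + 1))
                  - I t (traj 𝒦 x a w.2 t) (a t)))) := by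
          simp only [Finset.sum_sub_distrib]
          ring
        rw [h2]
        refine Finset.sum_congr rfl fun t _ => ?_
        rw [h1 t]
        ring
      rw [hdiff]
      refine (Finset.abs_sum_le_sum_abs _ _).trans (Finset.sum_le_sum ?_)
      intro t ht
      rw [herr t w]
      have hle := le_ciSup (herrBdd t w) (traj 𝒦 x a w.2 t, a t)
      simp only [hIdef]
      exact hle
    have hc0 : 0 ≤ ∑ t ∈ Finset.range H, err t w :=
      Finset.sum_nonneg fun t _ => herr0 t w
    have h1 : Z w ≤ Vstar 0 x + ∑ t ∈ Finset.range H, err t w := by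
      rw [hZw, ← hdual w.2]
      refine ciSup_le fun a => ?_
      have h2 := (abs_le.1 (hOOstar a)).2
      have h3 := le_ciSup (hOstarBdd w.2) a
      linarith
    have h2 : Vstar 0 x ≤ Z w + ∑ t ∈ Finset.range H, err t w := by
      rw [hZw, ← hdual w.2]
      refine ciSup_le fun a => ?_
      have h2 := (abs_le.1 (hOOstar a)).1
      have h3 := le_ciSup (hOBdd w) a
      linarith
    rw [abs_le]
    constructor <;> linarith
  -- measure theory wrap-up
  set c : ℝ := Vstar 0 x with hcdef
  set Esum : Ω₀ × (ℕ → E) → ℝ := fun w => ∑ t ∈ Finset.range H, err t w with hEdef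
  set Ce : ℝ := C + C + Bη with hCedef
  have hCe0 : 0 ≤ Ce := by positivity
  have hE0 : ∀ w, 0 ≤ Esum w := fun w => Finset.sum_nonneg fun t _ => herr0 t w
  have hEb : ∀ w, |Esum w| ≤ (H : ℝ) * Ce := by
    intro w
    rw [abs_of_nonneg (hE0 w)]
    calc Esum w ≤ ∑ _t ∈ Finset.range H, Ce :=
          Finset.sum_le_sum fun t _ => herrb t w
      _ = (H : ℝ) * Ce := by
          rw [Finset.sum_const, Finset.card_range, nsmul_eq_mul]
  have hEm : AEStronglyMeasurable Esum μ :=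
    Finset.aestronglyMeasurable_fun_sum (Finset.range H) fun t _ => herrm t
  have hM0 : 0 ≤ M := by positivity
  have hZL2 : MemLp Z 2 μ := memLp2_of_bound M hZm hZb
  have hZint : Integrable Z μ := integrable_of_bound M hZm hZb
  have hZ2int : Integrable (fun w => Z w ^ 2) μ :=
    integrable_of_bound (M ^ 2) (hZm.pow 2) fun w => by
      rw [abs_pow]; exact pow_le_pow_left₀ (abs_nonneg _) (hZb w) 2
  have hZcm : AEStronglyMeasurable (fun w => Z w - c) μ := hZm.sub aestronglyMeasurable_const
  have hZcb : ∀ w, |Z w - c| ≤ M + |c| := fun w =>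
    (abs_sub _ _).trans (add_le_add (hZb w) le_rfl)
  have hZc2int : Integrable (fun w => (Z w - c) ^ 2) μ :=
    integrable_of_bound ((M + |c|) ^ 2) (hZcm.pow 2) fun w => by
      rw [abs_pow]; exact pow_le_pow_left₀ (abs_nonneg _) (hZcb w) 2
  have hE2int : Integrable (fun w => Esum w ^ 2) μ :=
    integrable_of_bound (((H : ℝ) * Ce) ^ 2) (hEm.pow 2) fun w => by
      rw [abs_pow]; exact pow_le_pow_left₀ (abs_nonneg _) (hEb w) 2
  -- variance identity and comparison
  have hvar : variance Z μ = (∫ w, Z w ^ 2 ∂μ) - (∫ w, Z w ∂μ) ^ 2 := by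
    have := variance_eq_sub (μ := μ) hZL2
    simpa [Pi.pow_apply] using this
  have hexp : ∫ w, (Z w - c) ^ 2 ∂μ
      = (∫ w, Z w ^ 2 ∂μ) - 2 * c * (∫ w, Z w ∂μ) + c ^ 2 := by
    have h1 : (fun w => (Z w - c) ^ 2)
        = fun w => Z w ^ 2 + (-(2 * c)) * Z w + c ^ 2 := by
      funext w; ring
    have hc1 : Integrable (fun w => (-(2 * c)) * Z w) μ := hZint.const_mul _
    have hadd : Integrable (fun w => Z w ^ 2 + (-(2 * c)) * Z w) μ := hZ2int.add hc1
    rw [h1, integral_add hadd (integrable_const _), integral_add hZ2int hc1,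
      MeasureTheory.integral_const_mul, integral_const]
    simp [measure_univ]
    ring
  have hcomp : ∫ w, (Z w - c) ^ 2 ∂μ ≤ ∫ w, Esum w ^ 2 ∂μ := by
    refine integral_mono hZc2int hE2int fun w => ?_
    have h1 := hkey w
    calc (Z w - c) ^ 2 = |Z w - c| ^ 2 := (sq_abs _).symm
      _ ≤ Esum w ^ 2 := pow_le_pow_left₀ (abs_nonneg _) h1 2
  have part1 : variance Z μ ≤ ∫ w, Esum w ^ 2 ∂μ := by
    have hsq : 0 ≤ ((∫ w, Z w ∂μ) - c) ^ 2 := sq_nonneg _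
    nlinarith [hexp, hcomp, hvar]
  refine ⟨part1, ?_⟩
  -- Minkowski by induction
  have key2 : ∀ n : ℕ,
      Real.sqrt (∫ w, (∑ t ∈ Finset.range n, err t w) ^ 2 ∂μ)
        ≤ ∑ t ∈ Finset.range n, Real.sqrt (∫ w, err t w ^ 2 ∂μ) := by
    intro n
    induction n with
    | zero => simp
    | succ n ih =>
      have hfm : AEStronglyMeasurable (fun w => ∑ t ∈ Finset.range n, err t w) μ :=
        Finset.aestronglyMeasurable_fun_sum (Finset.range n) fun t _ => herrm t
      have hf0 : ∀ w, 0 ≤ ∑ t ∈ Finset.range n, err t w :=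
        fun w => Finset.sum_nonneg fun t _ => herr0 t w
      have hfb : ∀ w, ∑ t ∈ Finset.range n, err t w ≤ (n : ℝ) * Ce := by
        intro w
        calc _ ≤ ∑ _t ∈ Finset.range n, Ce := Finset.sum_le_sum fun t _ => herrb t w
          _ = (n : ℝ) * Ce := by rw [Finset.sum_const, Finset.card_range, nsmul_eq_mul]
      have hmk := minkowski_aux μ hfm (herrm n) hf0 (herr0 n) hfb (fun w => herrb n w)
      calc Real.sqrt (∫ w, (∑ t ∈ Finset.range (n + 1), err t w) ^ 2 ∂μ)
          = Real.sqrt (∫ w, ((∑ t ∈ Finset.range n, err t w) + err n w) ^ 2 ∂μ) := by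
            simp_rw [Finset.sum_range_succ]
        _ ≤ Real.sqrt (∫ w, (∑ t ∈ Finset.range n, err t w) ^ 2 ∂μ)
            + Real.sqrt (∫ w, err n w ^ 2 ∂μ) := hmk
        _ ≤ ∑ t ∈ Finset.range (n + 1), Real.sqrt (∫ w, err t w ^ 2 ∂μ) := by
            rw [Finset.sum_range_succ]
            exact add_le_add_left ih _
  calc Real.sqrt (variance Z μ) ≤ Real.sqrt (∫ w, Esum w ^ 2 ∂μ) :=
        Real.sqrt_le_sqrt part1
    _ ≤ _ := key2 H
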